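/- Assume in addition that g(NW(g)) = NW(g). Then p₁(NW(F)) = NW(g), where NW(F) is the non-wandering set of F : T × N → T × N. -/

import Mathlib

/-- A point `x` is non-wandering for `h` if for every neighborhood `U` of `x`
there is `n ≥ 1` with `h^n(U) ∩ U ≠ ∅`. -/
def NonWandering {X : Type*} [TopologicalSpace X] (h : X → X) (x : X) : Prop :=
  ∀ U ∈ nhds x, ∃ n ≥ 1, (h^[n] '' U ∩ U).Nonempty

/-- if moreover g(NW(g)) = NW(g), then p₁(NW(F)) = NW(g). -/
theorem stmt6 {T N : Type*} [MetricSpace T] [CompactSpace T] [Nonempty T]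
    [MetricSpace N] [CompactSpace N] [Nonempty N]
    (g : T → T) (hgc : Continuous g) (hgs : Function.Surjective g)
    (hgcov : IsCoveringMap g)
    (F : T × N → T × N) (hFc : Continuous F) (hFi : Function.Injective F)
    (hfib : ∀ p : T × N, (F p).1 = g p.1)
    (C lam : ℝ) (hC : 0 < C) (hlam0 : 0 < lam) (hlam1 : lam < 1)
    (hcontr : ∀ (t : T) (n : ℕ),
      Metric.diam (F^[n] '' ({t} ×ˢ (Set.univ : Set N))) ≤ C * lam ^ n)
    (hNWinv : g '' {t | NonWandering g t} = {t | NonWandering g t}) :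
    Prod.fst '' {p : T × N | NonWandering F p} = {t | NonWandering g t} := by
  have hfib_iter : ∀ (n : ℕ) (q : T × N), (F^[n] q).1 = g^[n] q.1 := by
    intro n
    induction n with
    | zero => intro q; simp
    | succ n ih =>
      intro q
      rw [Function.iterate_succ_apply, Function.iterate_succ_apply, ih, hfib]
  ext t
  constructor
  · rintro ⟨p, hp, rfl⟩
    intro U hU
    have hpre : Prod.fst ⁻¹' U ∈ nhds p :=
      ContinuousAt.preimage_mem_nhds continuous_fst.continuousAt hU
    obtain ⟨n, hn1, q, ⟨r, hr, rfl⟩, hq⟩ := hp _ hpre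
    exact ⟨n, hn1, (F^[n] r).1, ⟨r.1, hr, (hfib_iter n r).symm⟩, hq⟩
  · intro ht
    -- build a backward orbit of t inside NW(g)
    have hpre : ∀ x : {x : T // NonWandering g x},
        ∃ y : {x : T // NonWandering g x}, g y.1 = x.1 := by
      rintro ⟨x, hx⟩
      have hx' : x ∈ g '' {t | NonWandering g t} := by rw [hNWinv]; exact hx
      obtain ⟨y, hy, hyx⟩ := hx'
      exact ⟨⟨y, hy⟩, hyx⟩
    choose f hf using hpre
    let seq : ℕ → {x : T // NonWandering g x} := fun k => f^[k] ⟨t, ht⟩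
    have hseq0 : (seq 0).1 = t := rfl
    have hseqs : ∀ k, g (seq (k + 1)).1 = (seq k).1 := by
      intro k
      have h1 : seq (k + 1) = f (seq k) := Function.iterate_succ_apply' f k _
      rw [h1]; exact hf (seq k)
    -- the nested compact sets
    set A : ℕ → Set (T × N) := fun m => F^[m] '' ({(seq m).1} ×ˢ (Set.univ : Set N)) with hA
    have hAcomp : ∀ m, IsCompact (A m) := by
      intro m
      exact ((isCompact_singleton.prod isCompact_univ).image (hFc.iterate m))
    have hAne : ∀ m, (A m).Nonempty := by
      intro m
      exact ((Set.singleton_nonempty _).prod Set.univ_nonempty).image _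
    have hAanti : ∀ m, A (m + 1) ⊆ A m := by
      intro m
      have hstep : F '' ({(seq (m + 1)).1} ×ˢ (Set.univ : Set N)) ⊆
          {(seq m).1} ×ˢ (Set.univ : Set N) := by
        rintro y ⟨q, ⟨hq1, -⟩, rfl⟩
        refine ⟨?_, trivial⟩
        simp only [Set.mem_singleton_iff] at hq1 ⊢
        rw [hfib, hq1, hseqs]
      calc A (m + 1) = F^[m] '' (F '' ({(seq (m + 1)).1} ×ˢ (Set.univ : Set N))) := by
            rw [hA]
            simp only [← Set.image_comp, ← Function.iterate_succ_apply]
            rfl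
        _ ⊆ A m := Set.image_mono hstep
    obtain ⟨p, hpmem⟩ :=
      IsCompact.nonempty_iInter_of_sequence_nonempty_isCompact_isClosed A hAanti hAne
        (hAcomp 0) (fun m => (hAcomp m).isClosed)
    have hpA : ∀ m, p ∈ A m := fun m => Set.mem_iInter.mp hpmem m
    have hp1 : p.1 = t := by
      have h0 := hpA 0
      simp only [hA, Function.iterate_zero, Set.image_id] at h0
      obtain ⟨h01, -⟩ := h0
      simpa [hseq0] using h01
    refine ⟨p, ?_, hp1⟩
    -- p is non-wandering for F
    intro U hU
    obtain ⟨ε, hε, hball⟩ := Metric.mem_nhds_iff.mp hU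
    obtain ⟨m, hm⟩ : ∃ m, C * lam ^ m < ε / 2 := by
      obtain ⟨m, hm⟩ := exists_pow_lt_of_lt_one (div_pos (half_pos hε) hC) hlam1
      exact ⟨m, by rw [mul_comm]; exact (lt_div_iff₀ hC).mp hm⟩
    -- A m ⊆ ball p ε
    have hAm_ball : A m ⊆ Metric.ball p ε := by
      intro x hx
      have hd : dist x p ≤ Metric.diam (A m) :=
        Metric.dist_le_diam_of_mem (hAcomp m).isBounded hx (hpA m)
      have : dist x p ≤ C * lam ^ m := hd.trans (hcontr _ m)
      have : dist x p < ε / 2 := lt_of_le_of_lt this hm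
      exact Metric.mem_ball.mpr (this.trans (half_lt_self hε))
    -- tube lemma
    have hWopen : IsOpen (F^[m] ⁻¹' Metric.ball p ε) :=
      (Metric.isOpen_ball).preimage (hFc.iterate m)
    have hWsub : {(seq m).1} ×ˢ (Set.univ : Set N) ⊆ F^[m] ⁻¹' Metric.ball p ε := by
      intro q hq
      exact hAm_ball ⟨q, hq, rfl⟩
    obtain ⟨V, V', hVo, hV'o, hV1, hV2, hVsub⟩ :=
      generalized_tube_lemma isCompact_singleton isCompact_univ hWopen hWsub
    have hVnhds : V ∈ nhds (seq m).1 :=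
      hVo.mem_nhds (hV1 rfl)
    obtain ⟨n, hn1, y, ⟨s, hs, rfl⟩, hy⟩ := (seq m).2 V hVnhds
    -- construct the returning point
    obtain ⟨w⟩ : Nonempty N := inferInstance
    have hxmem : F^[m] (s, w) ∈ Metric.ball p ε := hVsub ⟨hs, hV2 trivial⟩
    have hFn : F^[n] (F^[m] (s, w)) = F^[m] (F^[n] (s, w)) := by
      rw [← Function.iterate_add_apply, ← Function.iterate_add_apply, Nat.add_comm]
    have hxmem2 : F^[n] (F^[m] (s, w)) ∈ Metric.ball p ε := by
      rw [hFn]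
      refine hVsub ⟨?_, hV2 trivial⟩
      rw [hfib_iter]
      exact hy
    exact ⟨n, hn1, F^[n] (F^[m] (s, w)), ⟨F^[m] (s, w), hball hxmem, rfl⟩, hball hxmem2⟩
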